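/- For n ≥ 4, let M be a perfect matching of FQ_n with M ⊆ M_1 ∪ M_2, M ∩ M_1 ≠ ∅ and M ∩ M_2 ≠ ∅. Then the graph G = FQ_n − M has a vertex u such that every other vertex of G is at distance at most n−1 from u; in particular G has a vertex of eccentricity at most n−1. -/

import Mathlib

open SimpleGraph

def cmpl {n : ℕ} (x : Fin n → Bool) : Fin n → Bool := fun i => !x i

/-- The `n`-dimensional hypercube on vertex set `{0,1}^n`. -/
def Q (n : ℕ) : SimpleGraph (Fin n → Bool) where
  Adj x y := hammingDist x y = 1
  symm := ⟨fun x y h => (hammingDist_comm y x).trans h⟩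
  loopless := ⟨fun x h => by simp [hammingDist_self] at h⟩

/-- The folded hypercube: `Q n` plus all complement edges. -/
def FQ (n : ℕ) : SimpleGraph (Fin n → Bool) where
  Adj x y := hammingDist x y = 1 ∨ (x ≠ y ∧ y = cmpl x)
  symm := by
    refine ⟨?_⟩
    intro x y h
    rcases h with h | ⟨hne, he⟩
    · exact Or.inl ((hammingDist_comm y x).trans h)
    · refine Or.inr ⟨hne.symm, ?_⟩
      subst he; funext i; simp [cmpl]
  loopless := by
    refine ⟨?_⟩
    intro x h
    rcases h with h | ⟨hne, _⟩
    · simp [hammingDist_self] at h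
    · exact hne rfl

/-- The set of hypercube edges in coordinate direction `j`. -/
def Mdir (n : ℕ) (j : Fin n) : Set (Sym2 (Fin n → Bool)) :=
  {e | ∃ x, e = s(x, Function.update x j (!x j))}

/-- The set of complement edges. -/
def M2 (n : ℕ) : Set (Sym2 (Fin n → Bool)) := {e | ∃ x, e = s(x, cmpl x)}

/-- `M` is a perfect matching of `G`: a set of edges of `G` such that every
vertex lies in exactly one edge of `M`. -/
def IsPerfectMatchingSet {V : Type*} (G : SimpleGraph V) (M : Set (Sym2 V)) : Prop :=
  M ⊆ G.edgeSet ∧ ∀ v : V, ∃! e, e ∈ M ∧ v ∈ e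

section Aux

variable {n : ℕ}

/-- Flip coordinate `j`. -/
def flipc (j : Fin n) (x : Fin n → Bool) : Fin n → Bool := Function.update x j (!x j)

lemma flipc_apply_self (j : Fin n) (x : Fin n → Bool) : flipc j x j = !x j := by simp [flipc]

lemma flipc_apply_ne {i j : Fin n} (h : i ≠ j) (x : Fin n → Bool) : flipc j x i = x i := by
  simp [flipc, Function.update_apply, h]

lemma flipc_flipc (j : Fin n) (x : Fin n → Bool) : flipc j (flipc j x) = x := by
  funext i
  by_cases h : i = j
  · subst h; simp [flipc]
  · rw [flipc_apply_ne h, flipc_apply_ne h]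

lemma cmpl_apply (x : Fin n → Bool) (i : Fin n) : cmpl x i = !x i := rfl

lemma cmpl_cmpl (x : Fin n → Bool) : cmpl (cmpl x) = x := by funext i; simp [cmpl]

lemma cmpl_ne (hn : 0 < n) (x : Fin n → Bool) : x ≠ cmpl x := by
  intro h
  have := congrFun h ⟨0, hn⟩
  simp [cmpl] at this

lemma cmpl_ne_flipc (hn : 2 ≤ n) (j : Fin n) (x : Fin n → Bool) : cmpl x ≠ flipc j x := by
  intro h
  obtain ⟨i, hij⟩ : ∃ i : Fin n, i ≠ j := by
    by_cases hj : (j : ℕ) = 0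
    · exact ⟨⟨1, by omega⟩, by intro hh; rw [← hh] at hj; simp at hj⟩
    · exact ⟨⟨0, by omega⟩, by intro hh; rw [← hh] at hj; simp at hj⟩
  have := congrFun h i
  rw [flipc_apply_ne hij, cmpl_apply] at this
  simp at this

lemma hamming_flipc (j : Fin n) (x : Fin n → Bool) : hammingDist x (flipc j x) = 1 := by
  unfold hammingDist
  have : ({i | x i ≠ flipc j x i} : Finset (Fin n)) = {j} := by
    ext k
    by_cases hk : k = j
    · subst hk; rw [Finset.mem_filter, Finset.mem_singleton, flipc_apply_self]; simp
    · simp [hk, flipc_apply_ne hk]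
  rw [this, Finset.card_singleton]

lemma hamming_update_lt {x y : Fin n → Bool} {i : Fin n} (h : x i ≠ y i) :
    hammingDist (Function.update x i (y i)) y < hammingDist x y := by
  unfold hammingDist
  have hset : ({k | Function.update x i (y i) k ≠ y k} : Finset (Fin n)) =
      ({k | x k ≠ y k} : Finset (Fin n)).erase i := by
    ext k
    by_cases hk : k = i
    · subst hk; simp
    · simp [Function.update_apply, hk]
  rw [hset]
  exact Finset.card_erase_lt_of_mem (by simpa using h)

lemma hamming_le_of_agree {x y : Fin n → Bool} {s : Finset (Fin n)}
    (h : ∀ i ∉ s, x i = y i) : hammingDist x y ≤ s.card := by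
  unfold hammingDist
  apply Finset.card_le_card
  intro k hk
  simp only [Finset.mem_filter, Finset.mem_univ, true_and] at hk
  by_contra hks
  exact hk (h k hks)

lemma hamming_cmpl (x y : Fin n → Bool) : hammingDist (cmpl x) (cmpl y) = hammingDist x y := by
  unfold hammingDist
  congr 1
  ext k
  simp [cmpl]

lemma mem_Mdir_iff {j : Fin n} {a b : Fin n → Bool} :
    s(a, b) ∈ Mdir n j ↔ b = flipc j a := by
  constructor
  · rintro ⟨x, hx⟩
    rcases Sym2.eq_iff.mp hx with ⟨rfl, rfl⟩ | ⟨ha, rfl⟩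
    · rfl
    · rw [ha]; exact (flipc_flipc j b).symm
  · rintro rfl
    exact ⟨a, rfl⟩

lemma mem_M2_iff {a b : Fin n → Bool} : s(a, b) ∈ M2 n ↔ b = cmpl a := by
  constructor
  · rintro ⟨x, hx⟩
    rcases Sym2.eq_iff.mp hx with ⟨rfl, rfl⟩ | ⟨ha, rfl⟩
    · rfl
    · rw [ha, cmpl_cmpl]
  · rintro rfl
    exact ⟨a, rfl⟩

end Aux

/-- If `M ⊆ M₁ ∪ M₂` is a perfect matching of `FQ n` meeting both `M₁` and `M₂`, then
`FQ n − M` has a vertex from which every vertex is at distance at most `n - 1`. -/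
theorem stmt10 (n : ℕ) (hn : 4 ≤ n) (M : Set (Sym2 (Fin n → Bool)))
    (hM : IsPerfectMatchingSet (FQ n) M)
    (hsub : M ⊆ Mdir n ⟨n - 1, by omega⟩ ∪ M2 n)
    (h1 : (M ∩ (Mdir n ⟨n - 1, by omega⟩)).Nonempty) (h2 : (M ∩ M2 n).Nonempty) :
    ∃ u : Fin n → Bool, ∀ v : Fin n → Bool,
      ((FQ n).deleteEdges M).Reachable u v ∧ ((FQ n).deleteEdges M).dist u v ≤ n - 1 := by
  classical
  set j0 : Fin n := ⟨n - 1, by omega⟩ with hj0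
  set G := (FQ n).deleteEdges M with hG
  set P : (Fin n → Bool) → Prop := fun x => s(x, cmpl x) ∈ M with hP
  have hn2 : 2 ≤ n := by omega
  -- a vertex cannot be matched by both its complement edge and its direction edge
  have hnotboth : ∀ x, P x → s(x, flipc j0 x) ∉ M := by
    intro x hx hmem
    have := (hM.2 x).unique ⟨hx, Sym2.mem_mk_left _ _⟩ ⟨hmem, Sym2.mem_mk_left _ _⟩
    exact cmpl_ne_flipc hn2 j0 x (Sym2.congr_right.mp this)
  -- each vertex is matched by its complement edge or its direction edge
  have hdich : ∀ x, P x ∨ s(x, flipc j0 x) ∈ M := by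
    intro x
    obtain ⟨e, ⟨heM, hxe⟩, -⟩ := hM.2 x
    rcases hsub heM with hd | hc
    · obtain ⟨y, rfl⟩ := hd
      right
      rcases Sym2.mem_iff.mp hxe with rfl | hx
      · exact heM
      · have hxf : x = flipc j0 y := hx
        have h1 : flipc j0 x = y := by rw [hxf, flipc_flipc]
        have : s(x, flipc j0 x) = s(y, flipc j0 y) := by
          rw [h1, hxf, Sym2.eq_swap]
        rw [this]; exact heM
    · obtain ⟨y, rfl⟩ := hc
      left
      rcases Sym2.mem_iff.mp hxe with rfl | hx
      · exact heM
      · have hxf : x = cmpl y := hx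
        have h1 : cmpl x = y := by rw [hxf, cmpl_cmpl]
        have : s(x, cmpl x) = s(y, cmpl y) := by
          rw [h1, hxf, Sym2.eq_swap]
        show s(x, cmpl x) ∈ M
        rw [this]; exact heM
  -- P is invariant under flipping the last coordinate
  have hPflip : ∀ x, P x → P (flipc j0 x) := by
    intro x hx
    rcases hdich (flipc j0 x) with h | h
    · exact h
    · exfalso
      rw [flipc_flipc] at h
      rw [Sym2.eq_swap] at h
      exact hnotboth x hx h
  -- low-direction edges all survive
  have hlow : ∀ (x : Fin n → Bool) (i : Fin n), i ≠ j0 → G.Adj x (flipc i x) := by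
    intro x i hi
    rw [hG, deleteEdges_adj]
    refine ⟨Or.inl (hamming_flipc i x), ?_⟩
    intro hmem
    rcases hsub hmem with hd | hc
    · have heq : flipc i x = flipc j0 x := mem_Mdir_iff.mp hd
      have := congrFun heq i
      rw [flipc_apply_self, flipc_apply_ne hi] at this
      simp at this
    · exact cmpl_ne_flipc hn2 i x (mem_M2_iff.mp hc).symm
  -- direction edge at a P-vertex survives
  have hdir : ∀ x, P x → G.Adj x (flipc j0 x) := by
    intro x hx
    rw [hG, deleteEdges_adj]
    exact ⟨Or.inl (hamming_flipc j0 x), hnotboth x hx⟩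
  -- complement edge at a non-P-vertex survives
  have hcmpl : ∀ x, ¬ P x → G.Adj x (cmpl x) := by
    intro x hx
    rw [hG, deleteEdges_adj]
    exact ⟨Or.inr ⟨cmpl_ne (by omega) x, rfl⟩, hx⟩
  -- walks within a "copy" (same last coordinate) using only low edges
  have hwalk : ∀ k, ∀ x y : Fin n → Bool, x j0 = y j0 → hammingDist x y ≤ k →
      ∃ w : G.Walk x y, w.length ≤ k := by
    intro k
    induction k with
    | zero =>
      intro x y _ h
      have : x = y := hammingDist_eq_zero.mp (Nat.le_zero.mp h)
      subst this
      exact ⟨SimpleGraph.Walk.nil, by simp⟩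
    | succ k ih =>
      intro x y hj h
      by_cases hxy : x = y
      · subst hxy; exact ⟨SimpleGraph.Walk.nil, by simp⟩
      · obtain ⟨i, hi⟩ : ∃ i, x i ≠ y i := by
          by_contra hcon
          push_neg at hcon
          exact hxy (funext hcon)
        have hij0 : i ≠ j0 := by
          intro hh; subst hh; exact hi hj
        have hyi : y i = !x i := by
          cases hxi : x i <;> cases hyi2 : y i <;> simp_all
        have hflip_eq : flipc i x = Function.update x i (y i) := by
          unfold flipc; rw [hyi]
        have hlt : hammingDist (flipc i x) y ≤ k := by
          rw [hflip_eq]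
          have := hamming_update_lt hi
          omega
        have hj' : flipc i x j0 = y j0 := by
          rw [flipc_apply_ne (Ne.symm hij0), hj]
        obtain ⟨w, hw⟩ := ih (flipc i x) y hj' hlt
        exact ⟨SimpleGraph.Walk.cons (hlow x i hij0) w, by
          simp only [SimpleGraph.Walk.length_cons]; omega⟩
  -- existence of a P-vertex with a low neighbor outside P
  have hpair : ∃ (u : Fin n → Bool) (i : Fin n), i ≠ j0 ∧ P u ∧ ¬ P (flipc i u) := by
    by_contra hcon
    push_neg at hcon
    obtain ⟨e2, he2m, he2s⟩ := h2
    obtain ⟨z, rfl⟩ := he2s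
    have hPz : P z := he2m
    obtain ⟨e1, he1m, he1s⟩ := h1
    obtain ⟨y0, rfl⟩ := he1s
    have hPy0 : ¬ P y0 := fun hp => hnotboth y0 hp he1m
    have htrans : ∀ k, ∀ x y : Fin n → Bool, hammingDist x y ≤ k → P x → P y := by
      intro k
      induction k with
      | zero =>
        intro x y h hx
        have : x = y := hammingDist_eq_zero.mp (Nat.le_zero.mp h)
        subst this; exact hx
      | succ k ih =>
        intro x y h hx
        by_cases hxy : x = y
        · subst hxy; exact hx
        · obtain ⟨i, hi⟩ : ∃ i, x i ≠ y i := by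
            by_contra hc
            push_neg at hc
            exact hxy (funext hc)
          have hyi : y i = !x i := by
            cases hxi : x i <;> cases hyi2 : y i <;> simp_all
          have hflip_eq : flipc i x = Function.update x i (y i) := by
            unfold flipc; rw [hyi]
          have hlt : hammingDist (flipc i x) y ≤ k := by
            rw [hflip_eq]
            have := hamming_update_lt hi
            omega
          have hPx' : P (flipc i x) := by
            by_cases hij : i = j0
            · subst hij; exact hPflip x hx
            · exact hcon x i hij hx
          exact ih (flipc i x) y hlt hPx'
    exact hPy0 (htrans (hammingDist z y0) z y0 le_rfl hPz)
  obtain ⟨u, i0, hi0, hPu, hPw⟩ := hpair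
  refine ⟨u, ?_⟩
  intro v
  have huniv : (Finset.univ : Finset (Fin n)).card = n := by simp
  suffices h : ∃ w : G.Walk u v, w.length ≤ n - 1 by
    obtain ⟨w, hw⟩ := h
    exact ⟨⟨w⟩, le_trans (SimpleGraph.dist_le w) hw⟩
  by_cases hsame : u j0 = v j0
  · -- same copy: low walk of length ≤ n-1
    have hcard : (Finset.univ.erase j0).card = n - 1 := by
      rw [Finset.card_erase_of_mem (Finset.mem_univ _), huniv]
    have hham : hammingDist u v ≤ n - 1 := by
      rw [← hcard]
      apply hamming_le_of_agree
      intro i hi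
      simp only [Finset.mem_erase, Finset.mem_univ, and_true, not_not] at hi
      rw [hi]; exact hsame
    exact hwalk (n - 1) u v hsame hham
  · by_cases hv : v = cmpl u
    · -- v is the complement of u: go through the low neighbor w and its complement edge
      subst hv
      set w := flipc i0 u with hw
      have step3 : ∃ p : G.Walk (cmpl w) (cmpl u), p.length ≤ n - 3 := by
        apply hwalk
        · rw [cmpl_apply, cmpl_apply, hw, flipc_apply_ne (Ne.symm hi0)]
        · have : hammingDist (cmpl w) (cmpl u) = 1 := by
            rw [hamming_cmpl, hw, hammingDist_comm, hamming_flipc]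
          omega
      obtain ⟨p, hp⟩ := step3
      refine ⟨SimpleGraph.Walk.cons (hlow u i0 hi0) (SimpleGraph.Walk.cons (hcmpl w hPw) p), ?_⟩
      simp only [SimpleGraph.Walk.length_cons]
      omega
    · -- other copy, not the complement: cross the direction edge at u
      have hvj : v j0 = !u j0 := by
        cases h1 : u j0 <;> cases h2 : v j0 <;> simp_all
      obtain ⟨i, hiuv⟩ : ∃ i, v i = u i := by
        by_contra hc
        push_neg at hc
        apply hv
        funext i
        have := hc i
        cases h1 : u i <;> cases h2 : v i <;> simp_all [cmpl]
      have hij0 : i ≠ j0 := by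
        intro hh; subst hh
        rw [hvj] at hiuv
        simp at hiuv
      have hcard : ((Finset.univ.erase j0).erase i).card = n - 2 := by
        rw [Finset.card_erase_of_mem, Finset.card_erase_of_mem (Finset.mem_univ _), huniv]
        · omega
        · exact Finset.mem_erase.mpr ⟨hij0, Finset.mem_univ _⟩
      have hham : hammingDist (flipc j0 u) v ≤ n - 2 := by
        rw [← hcard]
        apply hamming_le_of_agree
        intro k hk
        simp only [Finset.mem_erase, Finset.mem_univ, and_true, not_and_or, not_not] at hk
        rcases hk with rfl | rfl
        · rw [flipc_apply_ne hij0, hiuv]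
        · rw [flipc_apply_self, hvj]
      have hjj : flipc j0 u j0 = v j0 := by rw [flipc_apply_self, hvj]
      obtain ⟨p, hp⟩ := hwalk (n - 2) (flipc j0 u) v hjj hham
      refine ⟨SimpleGraph.Walk.cons (hdir u hPu) p, ?_⟩
      simp only [SimpleGraph.Walk.length_cons]
      omega
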